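/- There do not exist a continuous 1-periodic function p : ℝ → ℂ and a continuous function c : [0,∞) → ℂ with c(t) → 0 as t → ∞ such that sin(√t) = p(t) + c(t) for all t ≥ 0. -/

import Mathlib

open Filter Topology Set

lemma stmt17_lip (a b : ℝ) : |Real.sin a - Real.sin b| ≤ |a - b| := by
  rw [Real.sin_sub_sin, abs_mul, abs_mul, abs_two]
  have h1 := Real.abs_sin_le_abs (x := (a - b) / 2)
  have h2 := Real.abs_cos_le_one ((a + b) / 2)
  have h3 : |(a - b) / 2| = |a - b| / 2 := by rw [abs_div, abs_two]
  nlinarith [abs_nonneg (Real.sin ((a - b) / 2)), abs_nonneg ((a - b) / 2),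
    abs_nonneg (Real.cos ((a + b) / 2))]

lemma stmt17_sqrtTop : Tendsto (fun x : ℝ => Real.sqrt x) atTop atTop := by
  rw [tendsto_atTop_atTop]
  intro b
  refine ⟨b ^ 2, fun a ha => ?_⟩
  calc b ≤ |b| := le_abs_self b
    _ = Real.sqrt (b ^ 2) := (Real.sqrt_sq_eq_abs b).symm
    _ ≤ Real.sqrt a := Real.sqrt_le_sqrt ha

/-- There is no decomposition `sin √t = p(t) + c(t)` on `[0,∞)` with `p : ℝ → ℂ`
continuous and `1`-periodic and `c` continuous on `[0,∞)` tending to `0` at `∞`. -/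
theorem stmt17 :
    ¬ ∃ (p : ℝ → ℂ) (c : ℝ → ℂ), Continuous p ∧ (∀ t : ℝ, p (t + 1) = p t) ∧
      ContinuousOn c (Ici (0:ℝ)) ∧ Tendsto c atTop (𝓝 (0:ℂ)) ∧
      ∀ t : ℝ, 0 ≤ t → (Real.sin (Real.sqrt t) : ℂ) = p t + c t := by
  rintro ⟨p, c, -, hper, -, hc0, heq⟩
  have hpnat : ∀ (x : ℝ) (n : ℕ), p (x + n) = p x := by
    intro x n
    induction n with
    | zero => simp
    | succ k ih =>
      have h : x + ((k : ℝ) + 1) = (x + k) + 1 := by ring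
      push_cast
      rw [h, hper, ih]
  have hnatTop : Tendsto (fun n : ℕ => (n : ℝ)) atTop atTop :=
    tendsto_natCast_atTop_atTop
  -- √(s+n) - √n → 0
  have hsq : ∀ s : ℝ, 0 ≤ s →
      Tendsto (fun n : ℕ => Real.sqrt (s + n) - Real.sqrt n) atTop (𝓝 0) := by
    intro s hs
    have hsn : Tendsto (fun n : ℕ => s / Real.sqrt n) atTop (𝓝 0) :=
      tendsto_const_nhds.div_atTop (stmt17_sqrtTop.comp hnatTop)
    apply squeeze_zero_norm' _ hsn
    filter_upwards [eventually_ge_atTop 1] with n hn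
    have hn' : (0:ℝ) < n := by exact_mod_cast hn
    have hb0 : 0 < Real.sqrt n := Real.sqrt_pos.mpr hn'
    have ha := Real.sq_sqrt (by positivity : (0:ℝ) ≤ s + n)
    have hb2 := Real.sq_sqrt hn'.le
    have hab : Real.sqrt n ≤ Real.sqrt (s + n) := Real.sqrt_le_sqrt (by linarith)
    rw [Real.norm_eq_abs, abs_of_nonneg (by linarith), le_div_iff₀ hb0]
    nlinarith [Real.sqrt_nonneg (s + n)]
  -- p is constant on [0,∞)
  have hkey : ∀ s : ℝ, 0 ≤ s → p s = p 0 := by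
    intro s hs
    set F : ℕ → ℂ := fun n =>
      ((Real.sin (Real.sqrt (s + n)) : ℂ) - (Real.sin (Real.sqrt n) : ℂ)) -
        (c (s + n) - c n) with hF
    have hFeq : ∀ n : ℕ, F n = p s - p 0 := by
      intro n
      have h1 := heq (s + n) (by positivity)
      have h2 := heq (n : ℝ) (Nat.cast_nonneg n)
      rw [hpnat s n] at h1
      rw [show p ((n : ℝ)) = p 0 from by simpa using hpnat 0 n] at h2
      simp only [hF]
      linear_combination h1 - h2
    have habs : Tendsto (fun n : ℕ => |Real.sqrt (s + n) - Real.sqrt n|) atTop (𝓝 0) := by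
      have := (hsq s hs).abs
      rwa [abs_zero] at this
    have hr : Tendsto (fun n : ℕ => Real.sin (Real.sqrt (s + n)) - Real.sin (Real.sqrt n))
        atTop (𝓝 0) := by
      apply squeeze_zero_norm _ habs
      intro n
      exact stmt17_lip _ _
    have h1c : Tendsto (fun n : ℕ =>
        (Real.sin (Real.sqrt (s + n)) : ℂ) - (Real.sin (Real.sqrt n) : ℂ)) atTop (𝓝 0) := by
      have := (Complex.continuous_ofReal.tendsto 0).comp hr
      simp only [Function.comp_def, Complex.ofReal_sub, Complex.ofReal_zero] at this
      exact this
    have hc1 : Tendsto (fun n : ℕ => c (s + n)) atTop (𝓝 0) :=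
      hc0.comp (tendsto_atTop_add_const_left _ s hnatTop)
    have hc2 : Tendsto (fun n : ℕ => c (n : ℝ)) atTop (𝓝 0) := hc0.comp hnatTop
    have hF0 : Tendsto F atTop (𝓝 0) := by
      have := h1c.sub (hc1.sub hc2)
      simp only [sub_zero] at this
      exact this
    have hFc : Tendsto F atTop (𝓝 (p s - p 0)) := by
      rw [show F = fun _ => p s - p 0 from funext hFeq]
      exact tendsto_const_nhds
    exact sub_eq_zero.mp (tendsto_nhds_unique hFc hF0)
  -- hence sin √t converges at ∞
  have hA : Tendsto (fun t : ℝ => (Real.sin (Real.sqrt t) : ℂ)) atTop (𝓝 (p 0)) := by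
    refine Tendsto.congr' ?_ (by simpa using ((tendsto_const_nhds : Tendsto (fun _ : ℝ => p 0) atTop (𝓝 (p 0))).add hc0))
    filter_upwards [eventually_ge_atTop (0:ℝ)] with t ht
    rw [heq t ht, hkey t ht]
  have hpi := Real.pi_pos
  -- subsequence where sin √t = 1
  have hs1 : Tendsto (fun k : ℕ => (Real.pi / 2 + k * (2 * Real.pi)) ^ 2) atTop atTop := by
    have h : Tendsto (fun k : ℕ => Real.pi / 2 + k * (2 * Real.pi)) atTop atTop := by
      apply tendsto_atTop_add_const_left
      exact Tendsto.atTop_mul_const (by positivity) hnatTop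
    have := h.atTop_mul_atTop₀ h
    refine this.congr fun k => by ring
  have hs2 : Tendsto (fun k : ℕ => (-(Real.pi / 2) + (k + 1) * (2 * Real.pi)) ^ 2)
      atTop atTop := by
    have h : Tendsto (fun k : ℕ => -(Real.pi / 2) + (k + 1) * (2 * Real.pi)) atTop atTop := by
      apply tendsto_atTop_add_const_left
      apply Tendsto.atTop_mul_const (by positivity)
      exact tendsto_atTop_add_const_right _ _ hnatTop
    have := h.atTop_mul_atTop₀ h
    refine this.congr fun k => by ring
  have e1 : p 0 = 1 := by
    have h := hA.comp hs1
    have hval : ∀ k : ℕ,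
        (Real.sin (Real.sqrt ((Real.pi / 2 + k * (2 * Real.pi)) ^ 2)) : ℂ) = 1 := by
      intro k
      have hnn : (0:ℝ) ≤ Real.pi / 2 + k * (2 * Real.pi) := by positivity
      rw [Real.sqrt_sq hnn, Real.sin_add_nat_mul_two_pi, Real.sin_pi_div_two,
        Complex.ofReal_one]
    have h' : Tendsto (fun _ : ℕ => (1 : ℂ)) atTop (𝓝 (p 0)) := by
      refine h.congr fun k => ?_
      exact hval k
    exact tendsto_nhds_unique h' tendsto_const_nhds
  have e2 : p 0 = -1 := by
    have h := hA.comp hs2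
    have hval : ∀ k : ℕ,
        (Real.sin (Real.sqrt ((-(Real.pi / 2) + (k + 1) * (2 * Real.pi)) ^ 2)) : ℂ) = -1 := by
      intro k
      have hnn : (0:ℝ) ≤ -(Real.pi / 2) + (k + 1) * (2 * Real.pi) := by
        have hk : (0:ℝ) ≤ (k:ℝ) := Nat.cast_nonneg k
        nlinarith
      have hcast : ((k : ℝ) + 1) = ((k + 1 : ℕ) : ℝ) := by push_cast; ring
      rw [Real.sqrt_sq hnn, hcast, Real.sin_add_nat_mul_two_pi, Real.sin_neg,
        Real.sin_pi_div_two]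
      push_cast
      ring
    have h' : Tendsto (fun _ : ℕ => (-1 : ℂ)) atTop (𝓝 (p 0)) := by
      refine h.congr fun k => ?_
      exact hval k
    exact tendsto_nhds_unique h' tendsto_const_nhds
  rw [e1] at e2
  norm_num at e2
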